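/- (Schmidt–Eckart–Young–Mirsky) Let C0 : X → X be a positive, self-adjoint, compact bounded linear operator on a real separable Hilbert space X, and let (λ_n) denote its eigenvalues in decreasing order, repeated according to multiplicity. Then for every J ∈ ℕ: (i) every bounded linear operator P : X → X with rank(P) ≤ J satisfies ‖P − C0‖ ≥ λ_{J+1}, and (ii) the rank-J spectral truncation of C0 (the operator ∑_{n=1}^J λ_n ⟨e_n, ·⟩ e_n for an orthonormal family of eigenvectors e_n of C0 with C0 e_n = λ_n e_n) attains this bound: its operator-norm distance to C0 equals λ_{J+1}. Hence λ_{J+1} = inf{ ‖P − C0‖ : P ∈ BL(X;X), rank(P) ≤ J }. -/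

import Mathlib

open scoped InnerProductSpace

lemma aux_hasSum_sq {X : Type*} [NormedAddCommGroup X] [InnerProductSpace ℝ X]
    {e : ℕ → X} (he : Orthonormal ℝ e) {c : ℕ → ℝ} {y : X}
    (h : HasSum (fun n => c n • e n) y) : HasSum (fun n => c n ^ 2) (‖y‖ ^ 2) := by
  have key : ∀ s : Finset ℕ, ∑ n ∈ s, c n ^ 2 = ‖∑ n ∈ s, c n • e n‖ ^ 2 := by
    intro s
    rw [← real_inner_self_eq_norm_sq, he.inner_sum]
    simp [sq]
  have h3 : Filter.Tendsto (fun s : Finset ℕ => ‖∑ n ∈ s, c n • e n‖ ^ 2)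
      Filter.atTop (nhds (‖y‖ ^ 2)) := ((continuous_norm.pow 2).tendsto y).comp h
  rw [HasSum]
  simpa only [key, SummationFilter.unconditional_filter] using h3

lemma aux_upper {X : Type*} [NormedAddCommGroup X] [InnerProductSpace ℝ X] [CompleteSpace X]
    (C0 : X →L[ℝ] X) (lam : ℕ → ℝ) (e : ℕ → X)
    (he : Orthonormal ℝ e)
    (hanti : Antitone lam) (hnonneg : ∀ n, 0 ≤ lam n)
    (heig : ∀ n, C0 (e n) = lam n • e n)
    (hdiag : ∀ x : X, (∀ n, ⟪e n, x⟫_ℝ = 0) → C0 x = 0)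
    (J : ℕ) (x : X) :
    ‖C0 x - ∑ n ∈ Finset.range J, (lam n * ⟪e n, x⟫_ℝ) • e n‖ ≤ lam J * ‖x‖ := by
  set a : ℕ → ℝ := fun n => ⟪e n, x⟫_ℝ with ha
  -- summability of coefficients
  have hsa : Summable fun n => a n ^ 2 := by
    simpa [Real.norm_eq_abs, sq_abs] using he.inner_products_summable x
  -- summability of the projection series
  have hsp : Summable fun n => a n • e n := by
    have := (he.orthogonalFamily.summable_iff_norm_sq_summable a).mpr
      (by simpa [Real.norm_eq_abs, sq_abs] using hsa)
    simpa [LinearIsometry.toSpanSingleton_apply] using this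
  obtain ⟨p, hp⟩ := hsp
  -- x - p is orthogonal to each e m
  have hperp : ∀ m, ⟪e m, x - p⟫_ℝ = 0 := by
    intro m
    have hm := hp.mapL (innerSL ℝ (e m))
    have heq : (fun n => innerSL ℝ (e m) (a n • e n)) = fun n => if n = m then a m else 0 := by
      funext n
      by_cases hnm : n = m
      · subst hnm; simp [real_inner_smul_right, real_inner_self_eq_norm_sq, he.1 n]
      · simp [real_inner_smul_right, he.2 (Ne.symm hnm), hnm]
    rw [heq] at hm
    have : ⟪e m, p⟫_ℝ = a m := hm.unique (hasSum_ite_eq m (a m))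
    simp [inner_sub_right, this, ha]
  -- C0 x = C0 p
  have hC0xp : C0 x = C0 p := by
    have := hdiag (x - p) hperp
    rw [map_sub] at this
    exact sub_eq_zero.mp this
  -- C0 p as a sum
  have hC0p : HasSum (fun n => (lam n * a n) • e n) (C0 x) := by
    rw [hC0xp]
    have := hp.mapL C0
    convert this using 2 with n
    rw [map_smul, heig n, smul_smul, mul_comm]
  -- subtract the finite truncation
  have hfin : HasSum (fun n => if n < J then (lam n * a n) • e n else 0)
      (∑ n ∈ Finset.range J, (lam n * a n) • e n) := by
    have h0 : ∀ n ∉ Finset.range J,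
        (if n < J then (lam n * a n) • e n else 0) = 0 := by
      intro n hn
      simp only [Finset.mem_range, not_lt] at hn
      simp [Nat.not_lt.mpr hn]
    have := hasSum_sum_of_ne_finset_zero (L := SummationFilter.unconditional ℕ) h0
    have hsum_eq : ∑ n ∈ Finset.range J, (if n < J then (lam n * a n) • e n else 0)
        = ∑ n ∈ Finset.range J, (lam n * a n) • e n := by
      apply Finset.sum_congr rfl
      intro n hn
      simp [Finset.mem_range.mp hn]
    rwa [hsum_eq] at this
  set c : ℕ → ℝ := fun n => if n < J then 0 else lam n * a n with hc
  have hD : HasSum (fun n => c n • e n)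
      (C0 x - ∑ n ∈ Finset.range J, (lam n * a n) • e n) := by
    have := hC0p.sub hfin
    convert this using 2 with n
    by_cases hn : n < J <;> simp [hc, hn]
  have hDsq := aux_hasSum_sq he hD
  -- termwise bound
  have hbound : ∀ n, c n ^ 2 ≤ lam J ^ 2 * a n ^ 2 := by
    intro n
    by_cases hn : n < J
    · simp [hc, hn]
      positivity
    · push_neg at hn
      simp only [hc, if_neg (Nat.not_lt.mpr hn)]
      rw [mul_pow]
      apply mul_le_mul_of_nonneg_right _ (sq_nonneg _)
      exact pow_le_pow_left₀ (hnonneg n) (hanti hn) 2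
  have hsum_le : ‖C0 x - ∑ n ∈ Finset.range J, (lam n * a n) • e n‖ ^ 2
      ≤ lam J ^ 2 * ‖x‖ ^ 2 := by
    have h1 : ‖C0 x - ∑ n ∈ Finset.range J, (lam n * a n) • e n‖ ^ 2
        ≤ ∑' n, lam J ^ 2 * a n ^ 2 :=
      hDsq.tsum_eq ▸ Summable.tsum_le_tsum hbound hDsq.summable (hsa.mul_left _)
    have h2 : ∑' n, lam J ^ 2 * a n ^ 2 = lam J ^ 2 * ∑' n, a n ^ 2 := tsum_mul_left
    have h3 : ∑' n, a n ^ 2 ≤ ‖x‖ ^ 2 := by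
      have := he.tsum_inner_products_le x
      simpa [Real.norm_eq_abs, sq_abs] using this
    calc ‖C0 x - ∑ n ∈ Finset.range J, (lam n * a n) • e n‖ ^ 2
        ≤ lam J ^ 2 * ∑' n, a n ^ 2 := h2 ▸ h1
      _ ≤ lam J ^ 2 * ‖x‖ ^ 2 := by
          exact mul_le_mul_of_nonneg_left h3 (sq_nonneg _)
  have hgoal : ‖C0 x - ∑ n ∈ Finset.range J, (lam n * a n) • e n‖ ≤ lam J * ‖x‖ := by
    have hnn : 0 ≤ lam J * ‖x‖ := mul_nonneg (hnonneg J) (norm_nonneg _)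
    have := hsum_le
    rw [← mul_pow] at this
    exact (pow_le_pow_iff_left₀ (norm_nonneg _) hnn (two_ne_zero)).mp this
  exact hgoal

lemma aux_lower {X : Type*} [NormedAddCommGroup X] [InnerProductSpace ℝ X]
    (C0 : X →L[ℝ] X) (lam : ℕ → ℝ) (e : ℕ → X)
    (he : Orthonormal ℝ e)
    (hanti : Antitone lam) (hnonneg : ∀ n, 0 ≤ lam n)
    (heig : ∀ n, C0 (e n) = lam n • e n)
    (J : ℕ) (P : X →L[ℝ] X)
    (hP : LinearMap.rank (P : X →ₗ[ℝ] X) ≤ (J : Cardinal)) :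
    lam J ≤ ‖P - C0‖ := by
  classical
  set v : Fin (J + 1) → X := fun i => e i with hv
  have hvind : LinearIndependent ℝ v := he.linearIndependent.comp _ Fin.val_injective
  have hon : Orthonormal ℝ v := he.comp _ Fin.val_injective
  set V : Submodule ℝ X := Submodule.span ℝ (Set.range v) with hV
  set L : V →ₗ[ℝ] X := (P : X →ₗ[ℝ] X) ∘ₗ V.subtype with hL
  have hfd : FiniteDimensional ℝ V := FiniteDimensional.span_of_finite ℝ (Set.finite_range v)
  have hrankV : Module.rank ℝ V = (J + 1 : ℕ) := by
    rw [← Module.finrank_eq_rank]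
    norm_cast
    simpa [hV] using finrank_span_eq_card hvind
  have hker : LinearMap.ker L ≠ ⊥ := by
    intro hker
    have hinj : Function.Injective L := LinearMap.ker_eq_bot.mp hker
    have h1 : Module.rank ℝ V = LinearMap.rank L :=
      (LinearEquiv.ofInjective L hinj).rank_eq
    have h2 : LinearMap.rank L ≤ LinearMap.rank (P : X →ₗ[ℝ] X) :=
      LinearMap.rank_comp_le_left V.subtype (P : X →ₗ[ℝ] X)
    have : ((J + 1 : ℕ) : Cardinal) ≤ (J : Cardinal) :=
      hrankV ▸ h1 ▸ (h2.trans hP)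
    rw [Nat.cast_le] at this
    omega
  obtain ⟨u, humem, hune⟩ := (Submodule.ne_bot_iff _).mp hker
  have hPu : P (u : X) = 0 := humem
  have hxne : (u : X) ≠ 0 := fun h => hune (Subtype.ext h)
  -- write u as a finite combination
  obtain ⟨c, hcx⟩ := Submodule.mem_span_range_iff_exists_fun ℝ |>.mp u.2
  have hnormx : ‖(u : X)‖ ^ 2 = ∑ i, c i ^ 2 := by
    rw [← hcx, ← real_inner_self_eq_norm_sq, hon.inner_sum]
    simp [sq]
  have hC0x : C0 (u : X) = ∑ i, (c i * lam i) • v i := by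
    rw [← hcx, map_sum]
    apply Finset.sum_congr rfl
    intro i _
    rw [ContinuousLinearMap.map_smul]
    rw [hv]
    simp only []
    rw [heig (i : ℕ), smul_smul]
  have hnormC0 : ‖C0 (u : X)‖ ^ 2 = ∑ i, (c i * lam i) ^ 2 := by
    rw [hC0x, ← real_inner_self_eq_norm_sq, hon.inner_sum]
    simp [sq]
  have hsq : (lam J * ‖(u : X)‖) ^ 2 ≤ ‖C0 (u : X)‖ ^ 2 := by
    rw [mul_pow, hnormx, hnormC0, Finset.mul_sum]
    apply Finset.sum_le_sum
    intro i _
    have hiJ : (i : ℕ) ≤ J := Nat.lt_succ_iff.mp i.isLt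
    calc lam J ^ 2 * c i ^ 2
        ≤ lam (i : ℕ) ^ 2 * c i ^ 2 :=
          mul_le_mul_of_nonneg_right
            (pow_le_pow_left₀ (hnonneg J) (hanti hiJ) 2) (sq_nonneg _)
      _ = (c i * lam (i : ℕ)) ^ 2 := by ring
  have hle : lam J * ‖(u : X)‖ ≤ ‖C0 (u : X)‖ :=
    (pow_le_pow_iff_left₀ (mul_nonneg (hnonneg J) (norm_nonneg _))
      (norm_nonneg _) two_ne_zero).mp hsq
  have hPC : ‖(P - C0) (u : X)‖ = ‖C0 (u : X)‖ := by
    rw [ContinuousLinearMap.sub_apply, hPu, zero_sub, norm_neg]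
  have hop : ‖(P - C0) (u : X)‖ ≤ ‖P - C0‖ * ‖(u : X)‖ :=
    (P - C0).le_opNorm _
  have hx : 0 < ‖(u : X)‖ := norm_pos_iff.mpr hxne
  have : lam J * ‖(u : X)‖ ≤ ‖P - C0‖ * ‖(u : X)‖ := by
    calc lam J * ‖(u : X)‖ ≤ ‖C0 (u : X)‖ := hle
      _ = ‖(P - C0) (u : X)‖ := hPC.symm
      _ ≤ ‖P - C0‖ * ‖(u : X)‖ := hop
  exact le_of_mul_le_mul_right this hx

/-- STATEMENT 6: the Schmidt–Eckart–Young–Mirsky theorem for a positive, self-adjoint, compact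
operator `C0` on a real separable Hilbert space. The eigenvalue sequence in decreasing order
(with multiplicity) is encoded by an orthonormal family `e` of eigenvectors with nonincreasing
nonnegative eigenvalues `lam` (0-indexed: `lam n = λ_{n+1}`) that diagonalizes `C0`
(`C0` vanishes on the orthogonal complement of the family). -/
theorem stmt6
    {X : Type*} [NormedAddCommGroup X] [InnerProductSpace ℝ X] [CompleteSpace X]
    [TopologicalSpace.SeparableSpace X]
    (C0 : X →L[ℝ] X) (hC0pos : C0.IsPositive) (hC0cpt : IsCompactOperator (⇑C0))
    (lam : ℕ → ℝ) (e : ℕ → X)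
    (he : Orthonormal ℝ e)
    (hanti : Antitone lam) (hnonneg : ∀ n, 0 ≤ lam n)
    (heig : ∀ n, C0 (e n) = lam n • e n)
    (hdiag : ∀ x : X, (∀ n, ⟪e n, x⟫_ℝ = 0) → C0 x = 0)
    (J : ℕ) :
    -- (i) every operator of rank at most `J` is at distance at least `λ_{J+1} = lam J` from `C0`
    (∀ P : X →L[ℝ] X, LinearMap.rank (P : X →ₗ[ℝ] X) ≤ (J : Cardinal) →
      lam J ≤ ‖P - C0‖) ∧
    -- (ii) the rank-`J` spectral truncation `∑_{n<J} λ_{n+1} ⟨e n, ·⟩ e n` attains this bound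
    (‖(∑ n ∈ Finset.range J, lam n • ((innerSL ℝ (e n)).smulRight (e n))) - C0‖ = lam J) ∧
    -- hence `λ_{J+1}` is the infimum of distances to rank-`≤ J` operators
    (lam J = sInf ((fun P : X →L[ℝ] X => ‖P - C0‖) ''
      {P : X →L[ℝ] X | LinearMap.rank (P : X →ₗ[ℝ] X) ≤ (J : Cardinal)})) := by
  classical
  set T : X →L[ℝ] X := ∑ n ∈ Finset.range J, lam n • ((innerSL ℝ (e n)).smulRight (e n))
    with hT
  have hTx : ∀ x : X, T x = ∑ n ∈ Finset.range J, (lam n * ⟪e n, x⟫_ℝ) • e n := by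
    intro x
    rw [hT]
    simp [ContinuousLinearMap.sum_apply, ContinuousLinearMap.smul_apply,
      ContinuousLinearMap.smulRight_apply, innerSL_apply_apply, smul_smul]
  -- part (i)
  have part1 : ∀ P : X →L[ℝ] X, LinearMap.rank (P : X →ₗ[ℝ] X) ≤ (J : Cardinal) →
      lam J ≤ ‖P - C0‖ := fun P hP => aux_lower C0 lam e he hanti hnonneg heig J P hP
  -- rank of the truncation
  have hrankT : LinearMap.rank (T : X →ₗ[ℝ] X) ≤ (J : Cardinal) := by
    have hr : LinearMap.range (T : X →ₗ[ℝ] X) ≤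
        Submodule.span ℝ (e '' ↑(Finset.range J)) := by
      rintro y ⟨x, rfl⟩
      have : (T : X →ₗ[ℝ] X) x = T x := rfl
      rw [this, hTx]
      apply Submodule.sum_mem
      intro n hn
      exact Submodule.smul_mem _ _
        (Submodule.subset_span ⟨n, by simpa using hn, rfl⟩)
    refine (Submodule.rank_mono hr).trans ((rank_span_le _).trans ?_)
    rw [← Finset.coe_image]
    have h1 : Cardinal.mk ↑(↑(Finset.image e (Finset.range J)) : Set X)
        = ((Finset.image e (Finset.range J)).card : Cardinal) :=
      Cardinal.mk_coe_finset
    rw [h1]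
    exact Nat.cast_le.mpr ((Finset.card_image_le).trans (le_of_eq (Finset.card_range J)))
  -- part (ii)
  have part2 : ‖T - C0‖ = lam J := by
    apply le_antisymm
    · apply ContinuousLinearMap.opNorm_le_bound _ (hnonneg J)
      intro x
      rw [ContinuousLinearMap.sub_apply, norm_sub_rev, hTx]
      exact aux_upper C0 lam e he hanti hnonneg heig hdiag J x
    · exact part1 T hrankT
  refine ⟨part1, part2, ?_⟩
  have hmem : lam J ∈ (fun P : X →L[ℝ] X => ‖P - C0‖) ''
      {P : X →L[ℝ] X | LinearMap.rank (P : X →ₗ[ℝ] X) ≤ (J : Cardinal)} :=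
    ⟨T, hrankT, part2⟩
  apply le_antisymm
  · exact le_csInf ⟨lam J, hmem⟩ (by rintro b ⟨P, hP, rfl⟩; exact part1 P hP)
  · exact csInf_le ⟨lam J, by rintro b ⟨P, hP, rfl⟩; exact part1 P hP⟩ hmem
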